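/- Let Φ : [0,∞) → ℝ be a bounded, nonincreasing, nonnegative function with A := ∫_0^∞ Φ(v) dv < ∞. Then for every u ∈ ℝ, Σ_{k∈ℤ} Φ(|u − k|) · Φ(|k|/3) ≤ (D₁ + D₂) · Φ(|u|/4), where D₁ = 2(Φ(0) + A) and D₂ = Φ(0) + 6A. -/

import Mathlib

open MeasureTheory

/-- Discrete convolution estimate from the proof of Lemma 2.1: for a bounded,
nonincreasing, nonnegative `Φ` with `A = ∫₀^∞ Φ < ∞`, one has
`Σ_{k∈ℤ} Φ(|u−k|)·Φ(|k|/3) ≤ (D₁ + D₂)·Φ(|u|/4)` with `D₁ = 2(Φ(0)+A)`,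
`D₂ = Φ(0)+6A` (in particular the sum is finite). -/
theorem discrete_convolution_estimate
    (Φ : ℝ → ℝ)
    (hΦbdd : ∃ M : ℝ, ∀ x ∈ Set.Ici (0 : ℝ), Φ x ≤ M)
    (hΦanti : AntitoneOn Φ (Set.Ici (0 : ℝ)))
    (hΦnonneg : ∀ x ∈ Set.Ici (0 : ℝ), 0 ≤ Φ x)
    (hΦint : IntegrableOn Φ (Set.Ioi (0 : ℝ)))
    (u : ℝ) :
    Summable (fun k : ℤ => Φ |u - (k : ℝ)| * Φ (|(k : ℝ)| / 3)) ∧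
    ∑' k : ℤ, Φ |u - (k : ℝ)| * Φ (|(k : ℝ)| / 3) ≤
      (2 * (Φ 0 + ∫ v in Set.Ioi (0 : ℝ), Φ v) +
        (Φ 0 + 6 * ∫ v in Set.Ioi (0 : ℝ), Φ v)) * Φ (|u| / 4) := by
  set A : ℝ := ∫ v in Set.Ioi (0 : ℝ), Φ v with hAdef
  have hΦ0 : 0 ≤ Φ 0 := hΦnonneg 0 Set.self_mem_Ici
  have hA0 : 0 ≤ A :=
    setIntegral_nonneg measurableSet_Ioi fun x hx => hΦnonneg x (Set.mem_Ici.mpr hx.le)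
  -- comparison of sums of Φ on arithmetic grids with the integral
  have key : ∀ c : ℝ, 0 < c → ∀ n : ℕ,
      ∑ i ∈ Finset.range n, Φ ((i + 1 : ℕ) / c) ≤ c * A := by
    intro c hc n
    have hanti : AntitoneOn (fun x => Φ (x / c)) (Set.Icc (0:ℝ) (0 + (n:ℕ))) := by
      intro x hx y hy hxy
      exact hΦanti (div_nonneg hx.1 hc.le) (div_nonneg hy.1 hc.le) (by gcongr)
    have h1 := hanti.sum_le_integral
    simp only [zero_add] at h1
    have h2 : (∫ x in (0:ℝ)..(n:ℝ), Φ (x / c)) = c * ∫ x in (0:ℝ)..((n:ℝ)/c), Φ x := by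
      rw [intervalIntegral.integral_comp_div (c := c) Φ hc.ne', zero_div, smul_eq_mul]
    have h3 : (∫ x in (0:ℝ)..((n:ℝ)/c), Φ x) ≤ A := by
      rw [intervalIntegral.integral_of_le (by positivity)]
      refine setIntegral_mono_set hΦint ?_ (Set.Ioc_subset_Ioi_self).eventuallyLE
      exact ae_restrict_of_forall_mem measurableSet_Ioi fun x hx => hΦnonneg x (Set.mem_Ici.mpr (le_of_lt hx))
    calc ∑ i ∈ Finset.range n, Φ ((i + 1 : ℕ) / c) ≤ ∫ x in (0:ℝ)..(n:ℝ), Φ (x / c) := h1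
      _ = c * ∫ x in (0:ℝ)..((n:ℝ)/c), Φ x := h2
      _ ≤ c * A := mul_le_mul_of_nonneg_left h3 hc.le
  -- master lemma, shift 0
  have master0 : ∀ (s : ℕ → ℝ) (c : ℝ), 0 < c →
      (∀ n : ℕ, ((n + 1 : ℕ) : ℝ) / c ≤ s n) →
      Summable (fun n : ℕ => Φ (s n)) ∧ (∑' n : ℕ, Φ (s n)) ≤ c * A := by
    intro s c hc hs
    have hs0 : ∀ n, 0 ≤ s n := fun n =>
      le_trans (div_nonneg (by positivity) hc.le) (hs n)
    have hnn : ∀ n, 0 ≤ Φ (s n) := fun n => hΦnonneg _ (hs0 n)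
    have hps : ∀ N, ∑ i ∈ Finset.range N, Φ (s i) ≤ c * A := by
      intro N
      calc ∑ i ∈ Finset.range N, Φ (s i)
          ≤ ∑ i ∈ Finset.range N, Φ ((i + 1 : ℕ) / c) := by
            refine Finset.sum_le_sum fun i _ => ?_
            exact hΦanti (div_nonneg (by positivity) hc.le) (hs0 i) (hs i)
        _ ≤ c * A := key c hc N
    exact ⟨summable_of_sum_range_le hnn hps, Real.tsum_le_of_sum_range_le hnn hps⟩
  -- master lemma, shift 1
  have master1 : ∀ (s : ℕ → ℝ) (c : ℝ), 0 < c → (∀ n, 0 ≤ s n) →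
      (∀ n : ℕ, ((n + 1 : ℕ) : ℝ) / c ≤ s (n + 1)) →
      Summable (fun n : ℕ => Φ (s n)) ∧ (∑' n : ℕ, Φ (s n)) ≤ Φ 0 + c * A := by
    intro s c hc hs0 hs
    have hnn : ∀ n, 0 ≤ Φ (s n) := fun n => hΦnonneg _ (hs0 n)
    have hps : ∀ N, ∑ i ∈ Finset.range N, Φ (s i) ≤ Φ 0 + c * A := by
      intro N
      rcases N with _ | p
      · simp only [Finset.sum_range_zero]
        exact add_nonneg hΦ0 (mul_nonneg hc.le hA0)
      · rw [Finset.sum_range_succ']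
        have h1 : ∑ i ∈ Finset.range p, Φ (s (i + 1)) ≤ c * A := by
          calc ∑ i ∈ Finset.range p, Φ (s (i + 1))
              ≤ ∑ i ∈ Finset.range p, Φ ((i + 1 : ℕ) / c) := by
                refine Finset.sum_le_sum fun i _ => ?_
                exact hΦanti (div_nonneg (by positivity) hc.le) (hs0 _) (hs i)
            _ ≤ c * A := key c hc p
        have h2 : Φ (s 0) ≤ Φ 0 := hΦanti Set.self_mem_Ici (hs0 0) (hs0 0)
        linarith
    exact ⟨summable_of_sum_range_le hnn hps, Real.tsum_le_of_sum_range_le hnn hps⟩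
  -- master lemma, shift 2
  have master2 : ∀ (s : ℕ → ℝ) (c : ℝ), 0 < c → (∀ n, 0 ≤ s n) →
      (∀ n : ℕ, ((n + 1 : ℕ) : ℝ) / c ≤ s (n + 2)) →
      Summable (fun n : ℕ => Φ (s n)) ∧ (∑' n : ℕ, Φ (s n)) ≤ 2 * Φ 0 + c * A := by
    intro s c hc hs0 hs
    have hnn : ∀ n, 0 ≤ Φ (s n) := fun n => hΦnonneg _ (hs0 n)
    have hub : ∀ n, Φ (s n) ≤ Φ 0 := fun n => hΦanti Set.self_mem_Ici (hs0 n) (hs0 n)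
    have hps : ∀ N, ∑ i ∈ Finset.range N, Φ (s i) ≤ 2 * Φ 0 + c * A := by
      intro N
      rcases N with _ | N
      · simp only [Finset.sum_range_zero]
        nlinarith [mul_nonneg hc.le hA0]
      rcases N with _ | p
      · simp [Finset.sum_range_one]
        have := hub 0
        nlinarith [mul_nonneg hc.le hA0]
      · rw [Finset.sum_range_succ', Finset.sum_range_succ' (fun i => Φ (s (i + 1)))]
        have h1 : ∑ i ∈ Finset.range p, Φ (s (i + 1 + 1)) ≤ c * A := by
          calc ∑ i ∈ Finset.range p, Φ (s (i + 1 + 1))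
              ≤ ∑ i ∈ Finset.range p, Φ ((i + 1 : ℕ) / c) := by
                refine Finset.sum_le_sum fun i _ => ?_
                exact hΦanti (div_nonneg (by positivity) hc.le) (hs0 _) (hs i)
            _ ≤ c * A := key c hc p
        have h2 := hub 0
        have h3 := hub 1
        linarith
    exact ⟨summable_of_sum_range_le hnn hps, Real.tsum_le_of_sum_range_le hnn hps⟩
  -- the sum Σ Φ(|u-k|)
  have hL1 : Summable (fun k : ℤ => Φ |u - (k : ℝ)|) ∧
      (∑' k : ℤ, Φ |u - (k : ℝ)|) ≤ 2 * Φ 0 + 2 * A := by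
    set m : ℤ := ⌊u⌋ with hm
    set t : ℝ := u - (m : ℝ) with htd
    have ht0 : 0 ≤ t := sub_nonneg.2 (Int.floor_le u)
    have ht1 : t < 1 := by
      have := Int.lt_floor_add_one u
      simp only [htd]; push_cast; linarith
    set g : ℤ → ℝ := fun j => Φ |u - ((m + j : ℤ) : ℝ)| with hgdef
    have hgt : ∀ j : ℤ, g j = Φ |t - (j : ℝ)| := by
      intro j; simp only [hgdef, htd]; push_cast; ring_nf
    have hnat : Summable (fun n : ℕ => g n) ∧ (∑' n : ℕ, g n) ≤ 2 * Φ 0 + 1 * A := by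
      have h2 := master2 (fun n : ℕ => |t - ((n : ℤ) : ℝ)|) 1 one_pos
        (fun n => abs_nonneg _) ?_
      · refine ⟨h2.1.congr fun n => (hgt n).symm, ?_⟩
        calc (∑' n : ℕ, g n) = ∑' n : ℕ, Φ |t - ((n : ℤ) : ℝ)| :=
              tsum_congr fun n => hgt n
          _ ≤ 2 * Φ 0 + 1 * A := h2.2
      · intro n
        show ((n + 1 : ℕ) : ℝ) / 1 ≤ |t - (((n + 2 : ℕ) : ℤ) : ℝ)|
        have h : |t - (((n + 2 : ℕ) : ℤ) : ℝ)| = (((n + 2 : ℕ) : ℤ) : ℝ) - t := by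
          rw [abs_sub_comm, abs_of_nonneg]; push_cast; linarith
        rw [h]; push_cast; linarith
    have hneg : Summable (fun n : ℕ => g (-(n + 1))) ∧
        (∑' n : ℕ, g (-(n + 1))) ≤ 1 * A := by
      have h2 := master0 (fun n : ℕ => |t - ((-((n : ℤ) + 1) : ℤ) : ℝ)|) 1 one_pos ?_
      · refine ⟨h2.1.congr fun n => (hgt _).symm, ?_⟩
        calc (∑' n : ℕ, g (-(n + 1))) = ∑' n : ℕ, Φ |t - ((-((n : ℤ) + 1) : ℤ) : ℝ)| :=
              tsum_congr fun n => hgt _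
          _ ≤ 1 * A := h2.2
      · intro n
        show ((n + 1 : ℕ) : ℝ) / 1 ≤ |t - ((-((n : ℤ) + 1) : ℤ) : ℝ)|
        have h : |t - ((-((n : ℤ) + 1) : ℤ) : ℝ)| = t + ((n : ℝ) + 1) := by
          push_cast
          rw [sub_neg_eq_add]
          exact abs_of_nonneg (by linarith)
        rw [h]; push_cast; linarith
    have hgsum : Summable g := Summable.of_nat_of_neg_add_one hnat.1 hneg.1
    have hgts : (∑' j : ℤ, g j) ≤ 2 * Φ 0 + 2 * A := by
      rw [tsum_of_nat_of_neg_add_one hnat.1 hneg.1]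
      linarith [hnat.2, hneg.2]
    have he : ∀ j : ℤ, (fun k : ℤ => Φ |u - (k : ℝ)|) ((Equiv.addLeft m) j) = g j := by
      intro j; simp [hgdef, Equiv.addLeft]
    constructor
    · rw [← (Equiv.addLeft m).summable_iff]
      exact hgsum.congr fun j => (he j).symm
    · rw [← (Equiv.addLeft m).tsum_eq (fun k : ℤ => Φ |u - (k : ℝ)|)]
      exact le_trans (le_of_eq (tsum_congr he)) hgts
  -- the sum Σ Φ(|k|/3)
  have hL2 : Summable (fun k : ℤ => Φ (|(k : ℝ)| / 3)) ∧
      (∑' k : ℤ, Φ (|(k : ℝ)| / 3)) ≤ Φ 0 + 6 * A := by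
    have hnat : Summable (fun n : ℕ => Φ (|((n : ℤ) : ℝ)| / 3)) ∧
        (∑' n : ℕ, Φ (|((n : ℤ) : ℝ)| / 3)) ≤ Φ 0 + 3 * A := by
      refine master1 (fun n : ℕ => |((n : ℤ) : ℝ)| / 3) 3 (by norm_num)
        (fun n => by positivity) ?_
      intro n
      show ((n + 1 : ℕ) : ℝ) / 3 ≤ |(((n + 1 : ℕ) : ℤ) : ℝ)| / 3
      rw [show |(((n + 1 : ℕ) : ℤ) : ℝ)| = ((n + 1 : ℕ) : ℝ) by
        push_cast; rw [abs_of_nonneg]; positivity]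
    have hneg : Summable (fun n : ℕ => Φ (|((-((n : ℤ) + 1) : ℤ) : ℝ)| / 3)) ∧
        (∑' n : ℕ, Φ (|((-((n : ℤ) + 1) : ℤ) : ℝ)| / 3)) ≤ 3 * A := by
      refine master0 (fun n : ℕ => |((-((n : ℤ) + 1) : ℤ) : ℝ)| / 3) 3 (by norm_num) ?_
      intro n
      show ((n + 1 : ℕ) : ℝ) / 3 ≤ |((-((n : ℤ) + 1) : ℤ) : ℝ)| / 3
      rw [show |((-((n : ℤ) + 1) : ℤ) : ℝ)| = ((n + 1 : ℕ) : ℝ) by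
        push_cast; rw [abs_neg, abs_of_nonneg]; positivity]
    refine ⟨Summable.of_nat_of_neg_add_one
      (f := fun k : ℤ => Φ (|(k : ℝ)| / 3)) hnat.1 hneg.1, ?_⟩
    rw [tsum_of_nat_of_neg_add_one (f := fun k : ℤ => Φ (|(k : ℝ)| / 3)) hnat.1 hneg.1]
    linarith [hnat.2, hneg.2]
  -- pointwise bound
  have hpt : ∀ k : ℤ, Φ |u - (k : ℝ)| * Φ (|(k : ℝ)| / 3) ≤
      (Φ |u - (k : ℝ)| + Φ (|(k : ℝ)| / 3)) * Φ (|u| / 4) := by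
    intro k
    have n1 : 0 ≤ Φ |u - (k : ℝ)| := hΦnonneg _ (Set.mem_Ici.mpr (abs_nonneg _))
    have n2 : 0 ≤ Φ (|(k : ℝ)| / 3) := hΦnonneg _ (Set.mem_Ici.mpr (by positivity))
    have n3 : 0 ≤ Φ (|u| / 4) := hΦnonneg _ (Set.mem_Ici.mpr (by positivity))
    by_cases h : |u| / 4 ≤ |u - (k : ℝ)|
    · have h1 : Φ |u - (k : ℝ)| ≤ Φ (|u| / 4) := hΦanti (Set.mem_Ici.mpr (by positivity)) (Set.mem_Ici.mpr (abs_nonneg _)) h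
      nlinarith
    · push_neg at h
      have hk : |u| - |u - (k : ℝ)| ≤ |(k : ℝ)| := by
        have := abs_sub_abs_le_abs_sub u (u - (k : ℝ))
        simp only [sub_sub_cancel] at this
        linarith
      have h2 : |u| / 4 ≤ |(k : ℝ)| / 3 := by
        have : 0 ≤ |u| := abs_nonneg u
        linarith
      have h1 : Φ (|(k : ℝ)| / 3) ≤ Φ (|u| / 4) := hΦanti (Set.mem_Ici.mpr (by positivity)) (Set.mem_Ici.mpr (by positivity)) h2
      nlinarith
  have hfnn : ∀ k : ℤ, 0 ≤ Φ |u - (k : ℝ)| * Φ (|(k : ℝ)| / 3) := fun k =>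
    mul_nonneg (hΦnonneg _ (Set.mem_Ici.mpr (abs_nonneg _))) (hΦnonneg _ (Set.mem_Ici.mpr (by positivity)))
  have hgsum : Summable (fun k : ℤ =>
      (Φ |u - (k : ℝ)| + Φ (|(k : ℝ)| / 3)) * Φ (|u| / 4)) :=
    (hL1.1.add hL2.1).mul_right _
  have hsum : Summable (fun k : ℤ => Φ |u - (k : ℝ)| * Φ (|(k : ℝ)| / 3)) :=
    Summable.of_nonneg_of_le hfnn hpt hgsum
  refine ⟨hsum, ?_⟩
  have hn3 : 0 ≤ Φ (|u| / 4) := hΦnonneg _ (Set.mem_Ici.mpr (by positivity))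
  calc ∑' k : ℤ, Φ |u - (k : ℝ)| * Φ (|(k : ℝ)| / 3)
      ≤ ∑' k : ℤ, (Φ |u - (k : ℝ)| + Φ (|(k : ℝ)| / 3)) * Φ (|u| / 4) :=
        Summable.tsum_le_tsum hpt hsum hgsum
    _ = ((∑' k : ℤ, Φ |u - (k : ℝ)|) + ∑' k : ℤ, Φ (|(k : ℝ)| / 3)) * Φ (|u| / 4) := by
        rw [tsum_mul_right, Summable.tsum_add hL1.1 hL2.1]
    _ ≤ (2 * (Φ 0 + A) + (Φ 0 + 6 * A)) * Φ (|u| / 4) := by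
        apply mul_le_mul_of_nonneg_right _ hn3
        linarith [hL1.2, hL2.2]
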